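/- Let Γ be a non-bipartite geometric distance-regular graph with diameter D ≥ 4 and vertex set V, let (u_i)_{i=0}^D be the standard sequence of the smallest eigenvalue θ_min = −k/(a_1+1), and let φ : V → ℝ^N satisfy ⟨φ(x), φ(y)⟩ = u_{d(x,y)} for all vertices x, y. Suppose there exists j with 3 ≤ j ≤ D−1 such that a_i = c_i · a_1 for all 1 ≤ i ≤ j−1 (equivalently, γ_{j−1} = 1) and such that for all vertices x, y with d(x,y) = j the vectors F_j = φ(x) − φ(y) and C_j = Σ_{z ∈ Γ(x)∩Γ_{j−1}(y)} φ(z) − Σ_{w ∈ Γ_{j−1}(x)∩Γ(y)} φ(w) satisfy ⟨C_j, C_j⟩⟨F_j, F_j⟩ = ⟨C_j, F_j⟩². Then a_i = c_i · a_1 for all 1 ≤ i ≤ D, i.e., Γ is a regular near 2D-gon. -/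

import Mathlib

open Finset

/-- The intersection number `a_i := k - b_i - c_i`, where `k = b 0` is the valency. -/
def drgA (b c : ℕ → ℕ) (i : ℕ) : ℕ := b 0 - b i - c i

/-- `G` is a distance-regular graph with diameter `D` and intersection numbers
`b i`, `c i` (`0 ≤ i ≤ D`, with `b D = 0`, `c 0 = 0`): `G` is connected of diameter `D`,
and for any vertices `x, y` at distance `i`, `y` has exactly `c i` neighbours at distance
`i - 1` from `x` and exactly `b i` neighbours at distance `i + 1` from `x`. -/
def IsDRG {V : Type*} [Fintype V] (G : SimpleGraph V) [DecidableRel G.Adj]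
    (D : ℕ) (b c : ℕ → ℕ) : Prop :=
  G.Connected ∧
  (∀ x y : V, G.dist x y ≤ D) ∧
  (∃ x y : V, G.dist x y = D) ∧
  b D = 0 ∧ c 0 = 0 ∧
  ∀ i, i ≤ D → ∀ x y : V, G.dist x y = i →
    (Finset.univ.filter (fun z => G.Adj y z ∧ G.dist x z = i - 1)).card = c i ∧
    (Finset.univ.filter (fun z => G.Adj y z ∧ G.dist x z = i + 1)).card = b i

/-- `θ` is an eigenvalue of the adjacency matrix of `G`. -/
def IsAdjEigenvalue {V : Type*} [Fintype V] (G : SimpleGraph V) [DecidableRel G.Adj]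
    (θ : ℝ) : Prop :=
  ∃ v : V → ℝ, v ≠ 0 ∧ (G.adjMatrix ℝ).mulVec v = θ • v

/-- `θ` is the smallest eigenvalue of the adjacency matrix of `G`. -/
def IsSmallestAdjEigenvalue {V : Type*} [Fintype V] (G : SimpleGraph V) [DecidableRel G.Adj]
    (θ : ℝ) : Prop :=
  IsAdjEigenvalue G θ ∧ ∀ μ : ℝ, IsAdjEigenvalue G μ → θ ≤ μ

/-- The multiplicity of `θ` as an eigenvalue of the adjacency matrix of `G`,
i.e. the dimension of the `θ`-eigenspace. -/
noncomputable def adjMult {V : Type*} [Fintype V] (G : SimpleGraph V) [DecidableRel G.Adj]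
    (θ : ℝ) : ℕ :=
  Module.finrank ℝ (Module.End.eigenspace ((G.adjMatrix ℝ).mulVecLin) θ)

/-- `u` is the standard sequence of the eigenvalue `θ`:
`u 0 = 1`, `u 1 = θ / k`, and `c i * u (i-1) + a i * u i + b i * u (i+1) = θ * u i`
for `1 ≤ i ≤ D - 1`. -/
def IsStdSeq (D : ℕ) (b c : ℕ → ℕ) (θ : ℝ) (u : ℕ → ℝ) : Prop :=
  u 0 = 1 ∧ u 1 = θ / (b 0 : ℝ) ∧
  ∀ i, 1 ≤ i → i ≤ D - 1 →
    (c i : ℝ) * u (i - 1) + (drgA b c i : ℝ) * u i + (b i : ℝ) * u (i + 1) = θ * u i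

/-- A Delsarte clique: a clique of size `1 - k / θmin`. -/
def IsDelsarteClique {V : Type*} (G : SimpleGraph V) (k : ℕ) (θmin : ℝ)
    (C : Finset V) : Prop :=
  G.IsClique (C : Set V) ∧ (C.card : ℝ) = 1 - (k : ℝ) / θmin

/-- `G` is geometric with respect to the collection `𝒞` of Delsarte cliques:
every member of `𝒞` is a Delsarte clique and every edge lies in exactly one member of `𝒞`. -/
def IsGeometricWith {V : Type*} (G : SimpleGraph V) (k : ℕ) (θmin : ℝ)
    (𝒞 : Set (Finset V)) : Prop :=
  (∀ C ∈ 𝒞, IsDelsarteClique G k θmin C) ∧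
  ∀ x y : V, G.Adj x y → ∃! C : Finset V, C ∈ 𝒞 ∧ x ∈ C ∧ y ∈ C

/-- The distance `d(x, C) = min { d(x,c) : c ∈ C }` from a vertex to a set of vertices. -/
noncomputable def distToSet {V : Type*} (G : SimpleGraph V) (x : V) (C : Finset V) : ℕ :=
  sInf ((fun c => G.dist x c) '' (C : Set V))

/-- `C` is a completely regular code: the number of neighbours in
`C_j = {y : d(y,C) = j}` of a vertex `x` with `d(x,C) = i` depends only on `i` and `j`,
i.e. the distance partition of `C` is equitable. -/
def IsCompletelyRegularCode {V : Type*} [Fintype V] (G : SimpleGraph V) [DecidableRel G.Adj]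
    (C : Finset V) : Prop :=
  ∀ i j : ℕ, ∃ f : ℕ, ∀ x : V, distToSet G x C = i →
    (Finset.univ.filter (fun y => G.Adj x y ∧ distToSet G y C = j)).card = f

/-- `G` is non-bipartite (contains an odd cycle), i.e. not 2-colorable. -/
def NonBipartite {V : Type*} (G : SimpleGraph V) : Prop := ¬ G.Colorable 2

/-- A set `S` of vertices is strongly closed: any vertex `z` with
`d(x,z) + d(z,y) ≤ d(x,y) + 1` for some `x, y ∈ S` belongs to `S`. -/
def IsStronglyClosed {V : Type*} (G : SimpleGraph V) (S : Set V) : Prop :=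
  ∀ x ∈ S, ∀ y ∈ S, ∀ z : V, G.dist x z + G.dist z y ≤ G.dist x y + 1 → z ∈ S

/-- `G` is `m`-bounded: for every `1 ≤ i ≤ m` and all vertices `x, y` at distance `i`
there is a strongly closed set containing `x` and `y` inducing a connected subgraph
of diameter `i`. -/
def IsMBounded {V : Type*} [Fintype V] (G : SimpleGraph V) (m : ℕ) : Prop :=
  ∀ i, 1 ≤ i → i ≤ m → ∀ x y : V, G.dist x y = i →
    ∃ S : Set V, IsStronglyClosed G S ∧ x ∈ S ∧ y ∈ S ∧
      (G.induce S).Connected ∧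
      (∀ u v : S, (G.induce S).dist u v ≤ i) ∧ (∃ u v : S, (G.induce S).dist u v = i)

/-- The vector `C_j = Σ_{z ∈ Γ(x) ∩ Γ_{j-1}(y)} φ z - Σ_{w ∈ Γ_{j-1}(x) ∩ Γ(y)} φ w`. -/
noncomputable def Cvec {V : Type*} [Fintype V] (G : SimpleGraph V) [DecidableRel G.Adj]
    {N : ℕ} (φ : V → EuclideanSpace ℝ (Fin N)) (j : ℕ) (x y : V) :
    EuclideanSpace ℝ (Fin N) :=
  (∑ z ∈ Finset.univ.filter (fun z => G.Adj x z ∧ G.dist y z = j - 1), φ z)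
    - ∑ w ∈ Finset.univ.filter (fun w => G.dist x w = j - 1 ∧ G.Adj y w), φ w



section helpers

variable {V : Type*} {G : SimpleGraph V}

lemma my_getVert_dist_le (hc : G.Connected) {a b : V} (p : G.Walk a b) (i : ℕ) :
    G.dist a (p.getVert i) ≤ i := by
  induction p generalizing i with
  | nil =>
    rw [SimpleGraph.Walk.getVert_of_length_le _ (by simp), SimpleGraph.dist_self]; omega
  | @cons u v w h q ih =>
    cases i with
    | zero => simp
    | succ n =>
      have h1 : G.dist u v = 1 := SimpleGraph.dist_eq_one_iff_adj.mpr h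
      have h2 : G.dist v (q.getVert n) ≤ n := ih n
      have h3 : G.dist u ((SimpleGraph.Walk.cons h q).getVert (n+1))
          ≤ G.dist u v + G.dist v ((SimpleGraph.Walk.cons h q).getVert (n+1)) :=
        hc.dist_triangle
      simp only [SimpleGraph.Walk.getVert] at h3 ⊢
      omega

lemma my_exists_pred (hc : G.Connected) {x y : V} {d : ℕ} (h : G.dist x y = d + 1) :
    ∃ w, G.Adj w y ∧ G.dist x w = d := by
  obtain ⟨p, hp⟩ := hc.exists_walk_length_eq_dist x y
  have hadj : G.Adj (p.getVert d) y := by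
    have h' : G.Adj (p.getVert d) (p.getVert (d+1)) := p.adj_getVert_succ (by omega)
    have hl : p.getVert (d+1) = y := by rw [h] at hp; rw [← hp]; exact p.getVert_length
    rwa [hl] at h'
  refine ⟨p.getVert d, hadj, ?_⟩
  have hle : G.dist x (p.getVert d) ≤ d := my_getVert_dist_le hc p d
  have htri : G.dist x y ≤ G.dist x (p.getVert d) + G.dist (p.getVert d) y := hc.dist_triangle
  have h1 : G.dist (p.getVert d) y = 1 := SimpleGraph.dist_eq_one_iff_adj.mpr hadj
  omega

lemma my_realized (hc : G.Connected) {x : V} {n : ℕ} :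
    ∀ {y : V}, G.dist x y = n → ∀ i ≤ n, ∃ u v : V, G.dist u v = i := by
  induction n with
  | zero => intro y h i hi; exact ⟨x, y, by omega⟩
  | succ m ih =>
    intro y h i hi
    rcases Nat.lt_or_ge i (m+1) with hlt | hge
    · obtain ⟨w, hw, hdw⟩ := my_exists_pred hc h
      exact ih hdw i (by omega)
    · exact ⟨x, y, by omega⟩

lemma my_inner_expand {N : ℕ} (Cv F : EuclideanSpace ℝ (Fin N)) (t : ℝ) :
    (inner ℝ (Cv - t • F) (Cv - t • F) : ℝ)
      = (inner ℝ Cv Cv : ℝ) - 2 * t * (inner ℝ Cv F : ℝ) + t^2 * (inner ℝ F F : ℝ) := by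
  simp only [inner_sub_left, inner_sub_right, real_inner_smul_left, real_inner_smul_right]
  rw [real_inner_comm Cv F]
  ring

end helpers

/-- For a non-bipartite geometric distance-regular graph with diameter `D ≥ 4`,
smallest eigenvalue `θmin = -k/(a₁+1)` with standard sequence `u` and representation `φ`
with `⟨φ x, φ y⟩ = u (d(x,y))`: if for some `3 ≤ j ≤ D - 1` one has `a_i = c_i * a₁` for
all `1 ≤ i ≤ j - 1` (equivalently `γ_{j-1} = 1`) and all pairs `x, y` at distance `j`
satisfy `⟨C_j, C_j⟩ ⟨F_j, F_j⟩ = ⟨C_j, F_j⟩²`, then `a_i = c_i * a₁` for all `1 ≤ i ≤ D`,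
i.e. `G` is a regular near `2D`-gon. -/
theorem stmt_12 {V : Type*} [Fintype V] (G : SimpleGraph V) [DecidableRel G.Adj]
    (D : ℕ) (b c : ℕ → ℕ) (hDRG : IsDRG G D b c) (hD : 4 ≤ D)
    (hnb : NonBipartite G)
    (θmin : ℝ) (hθ : IsSmallestAdjEigenvalue G θmin)
    (hθval : θmin = -(b 0 : ℝ) / ((drgA b c 1 : ℝ) + 1))
    (𝒞 : Set (Finset V)) (hgeo : IsGeometricWith G (b 0) θmin 𝒞)
    (u : ℕ → ℝ) (hu : IsStdSeq D b c θmin u)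
    (N : ℕ) (φ : V → EuclideanSpace ℝ (Fin N))
    (hφ : ∀ x y : V, (inner ℝ (φ x) (φ y) : ℝ) = u (G.dist x y))
    (j : ℕ) (hj3 : 3 ≤ j) (hjD : j ≤ D - 1)
    (ha : ∀ i, 1 ≤ i → i ≤ j - 1 → drgA b c i = c i * drgA b c 1)
    (hS : ∀ x y : V, G.dist x y = j →
      (inner ℝ (Cvec G φ j x y) (Cvec G φ j x y) : ℝ) *
          (inner ℝ (φ x - φ y) (φ x - φ y) : ℝ) =
        (inner ℝ (Cvec G φ j x y) (φ x - φ y) : ℝ) ^ 2) :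
    ∀ i, 1 ≤ i → i ≤ D → drgA b c i = c i * drgA b c 1 := by  classical
  obtain ⟨conn, hdiam, ⟨xD, yD, hxyD⟩, hbD, hc0, hcnt⟩ := hDRG
  -- basic facts
  have hdeg : ∀ y : V, (univ.filter (fun z => G.Adj y z)).card = b 0 := by
    intro y
    have h := (hcnt 0 (Nat.zero_le D) y y SimpleGraph.dist_self).2
    have he : (univ.filter (fun z => G.Adj y z))
        = univ.filter (fun z => G.Adj y z ∧ G.dist y z = 0 + 1) := by
      ext z
      simp only [mem_filter, mem_univ, true_and]
      exact ⟨fun hz => ⟨hz, SimpleGraph.dist_eq_one_iff_adj.mpr hz⟩, fun hz => hz.1⟩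
    rw [he, h]
  have hreal : ∀ i ≤ D, ∃ x y : V, G.dist x y = i := my_realized conn hxyD
  have b_pos : ∀ i, i + 1 ≤ D → 1 ≤ b i := by
    intro i hi
    obtain ⟨x', y', hxy'⟩ := hreal (i+1) hi
    obtain ⟨w, hw, hdw⟩ := my_exists_pred conn hxy'
    have h := (hcnt i (by omega) x' w hdw).2
    rw [← h]
    apply Finset.card_pos.mpr
    exact ⟨y', by simp [hw, hxy']⟩
  have c_pos : ∀ i, 1 ≤ i → i ≤ D → 1 ≤ c i := by
    intro i hi1 hiD
    obtain ⟨x', y', hxy'⟩ := hreal i hiD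
    rw [show i = (i-1)+1 by omega] at hxy'
    obtain ⟨w, hw, hdw⟩ := my_exists_pred conn hxy'
    have h := (hcnt i hiD x' y' (by rw [hxy']; omega)).1
    rw [← h]
    apply Finset.card_pos.mpr
    exact ⟨w, by simp [hw.symm, hdw]⟩
  have hsum : ∀ d, 1 ≤ d → d ≤ D → ∀ x y : V, G.dist x y = d →
      ∃ m : ℕ, c d + m + b d = b 0 ∧
        ∀ g : ℕ → ℝ, ∑ z ∈ univ.filter (fun z => G.Adj y z), g (G.dist x z)
          = (c d : ℝ) * g (d-1) + (m:ℝ) * g d + (b d : ℝ) * g (d+1) := by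
    intro d hd1 hdD x y hxy
    set A := univ.filter (fun z => G.Adj y z ∧ G.dist x z = d - 1) with hA
    set B := univ.filter (fun z => G.Adj y z ∧ G.dist x z = d) with hB
    set Cf := univ.filter (fun z => G.Adj y z ∧ G.dist x z = d + 1) with hCf
    have hAc : A.card = c d := (hcnt d hdD x y hxy).1
    have hCc : Cf.card = b d := (hcnt d hdD x y hxy).2
    have htri : ∀ z, G.Adj y z → G.dist x z = d - 1 ∨ G.dist x z = d ∨ G.dist x z = d + 1 := by
      intro z hz
      have h1 : G.dist x z ≤ G.dist x y + G.dist y z := conn.dist_triangle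
      have h2 : G.dist x y ≤ G.dist x z + G.dist z y := conn.dist_triangle
      have h3 : G.dist y z = 1 := SimpleGraph.dist_eq_one_iff_adj.mpr hz
      have h4 : G.dist z y = 1 := by rw [SimpleGraph.dist_comm]; exact h3
      omega
    have hUnion : univ.filter (fun z => G.Adj y z) = (A ∪ B) ∪ Cf := by
      ext z
      simp only [hA, hB, hCf, mem_filter, mem_union, mem_univ, true_and]
      constructor
      · intro hz; rcases htri z hz with h | h | h
        · exact Or.inl (Or.inl ⟨hz, h⟩)
        · exact Or.inl (Or.inr ⟨hz, h⟩)
        · exact Or.inr ⟨hz, h⟩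
      · rintro ((⟨h,_⟩|⟨h,_⟩)|⟨h,_⟩) <;> exact h
    have hdisj1 : Disjoint A B := by
      rw [Finset.disjoint_left]
      intro z hz1 hz2
      rw [hA, mem_filter] at hz1; rw [hB, mem_filter] at hz2
      omega
    have hdisj2 : Disjoint (A ∪ B) Cf := by
      rw [Finset.disjoint_left]
      intro z hz1 hz2
      rw [mem_union, hA, mem_filter, hB, mem_filter] at hz1
      rw [hCf, mem_filter] at hz2
      rcases hz1 with h | h <;> omega
    refine ⟨B.card, ?_, ?_⟩
    · have hk := hdeg y
      rw [hUnion, Finset.card_union_of_disjoint hdisj2, Finset.card_union_of_disjoint hdisj1,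
        hAc, hCc] at hk
      omega
    · intro g
      rw [hUnion, Finset.sum_union hdisj2, Finset.sum_union hdisj1]
      have eA : ∑ z ∈ A, g (G.dist x z) = (A.card : ℝ) * g (d-1) :=
        calc ∑ z ∈ A, g (G.dist x z) = ∑ _z ∈ A, g (d-1) :=
              Finset.sum_congr rfl (fun z hz => by
                rw [hA, mem_filter] at hz
                rw [hz.2.2])
          _ = (A.card : ℝ) * g (d-1) := by rw [Finset.sum_const, nsmul_eq_mul]
      have eB : ∑ z ∈ B, g (G.dist x z) = (B.card : ℝ) * g d :=
        calc ∑ z ∈ B, g (G.dist x z) = ∑ _z ∈ B, g d :=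
              Finset.sum_congr rfl (fun z hz => by
                rw [hB, mem_filter] at hz
                rw [hz.2.2])
          _ = (B.card : ℝ) * g d := by rw [Finset.sum_const, nsmul_eq_mul]
      have eC : ∑ z ∈ Cf, g (G.dist x z) = (Cf.card : ℝ) * g (d+1) :=
        calc ∑ z ∈ Cf, g (G.dist x z) = ∑ _z ∈ Cf, g (d+1) :=
              Finset.sum_congr rfl (fun z hz => by
                rw [hCf, mem_filter] at hz
                rw [hz.2.2])
          _ = (Cf.card : ℝ) * g (d+1) := by rw [Finset.sum_const, nsmul_eq_mul]
      rw [eA, eB, eC, hAc, hCc]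
  have hk1 : 1 ≤ b 0 := by
    obtain ⟨x1, y1, hxy1⟩ := hreal 1 (by omega)
    have hadj : G.Adj x1 y1 := SimpleGraph.dist_eq_one_iff_adj.mp hxy1
    have hdx := hdeg x1
    rw [← hdx]
    exact Finset.card_pos.mpr ⟨y1, by simp [hadj]⟩
  have hsum' : ∀ i, 1 ≤ i → i ≤ D → ∀ x y : V, G.dist x y = i → ∀ g : ℕ → ℝ,
      ∑ z ∈ univ.filter (fun z => G.Adj y z), g (G.dist x z)
        = (c i : ℝ) * g (i-1) + (drgA b c i : ℝ) * g i + (b i : ℝ) * g (i+1) := by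
    intro i h1 h2 x y hxy g
    obtain ⟨m, hm1, hm2⟩ := hsum i h1 h2 x y hxy
    have hm : m = drgA b c i := by unfold drgA; omega
    rw [← hm]
    exact hm2 g
  have hpart : ∀ i, 1 ≤ i → i ≤ D → c i + drgA b c i + b i = b 0 := by
    intro i h1 h2
    obtain ⟨x', y', hxy'⟩ := hreal i h2
    obtain ⟨m, hm1, _⟩ := hsum i h1 h2 x' y' hxy'
    unfold drgA; omega
  obtain ⟨hu0, hu1, hrec⟩ := hu
  set α : ℝ := (drgA b c 1 : ℝ) with hα
  set σ : ℝ := -1 / (α + 1) with hσdef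
  have hα0 : (0:ℝ) ≤ α := by rw [hα]; exact Nat.cast_nonneg _
  have hαpos : (0:ℝ) < α + 1 := by linarith
  have hσ1 : (α + 1) * σ = -1 := by
    rw [hσdef]; field_simp
  have hσneg : σ < 0 := by nlinarith [hσ1]
  have hσne : σ ≠ 0 := ne_of_lt hσneg
  have hK : (0:ℝ) < (b 0 : ℝ) := by exact_mod_cast hk1
  have hθσ : θmin = (b 0 : ℝ) * σ := by
    rw [hθval, hσdef]; field_simp
  have hu1σ : u 1 = σ := by
    rw [hu1, hθσ]; field_simp
  by_cases hcase : drgA b c 1 = 0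
  · -- the graph would be bipartite: contradiction
    exfalso
    apply hnb
    have hσm1 : σ = -1 := by rw [hσdef, hα, hcase]; norm_num
    have hflip : ∀ a a' : V, G.Adj a a' → φ a' = - φ a := by
      intro a a' hadj
      have e1 : (inner ℝ (φ a) (φ a) : ℝ) = 1 := by rw [hφ, SimpleGraph.dist_self, hu0]
      have e2 : (inner ℝ (φ a) (φ a') : ℝ) = -1 := by
        rw [hφ, SimpleGraph.dist_eq_one_iff_adj.mpr hadj, hu1σ, hσm1]
      have e3 : (inner ℝ (φ a') (φ a') : ℝ) = 1 := by rw [hφ, SimpleGraph.dist_self, hu0]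
      have h1 : (inner ℝ (φ a + φ a') (φ a + φ a') : ℝ) = 0 := by
        rw [real_inner_add_add_self, e1, e2, e3]; ring
      have h2 : φ a + φ a' = 0 := inner_self_eq_zero.mp h1
      exact eq_neg_of_add_eq_zero_right h2
    have hwalk : ∀ (a a' : V) (p : G.Walk a a'), φ a' = ((-1 : ℝ)) ^ p.length • φ a := by
      intro a a' p
      induction p with
      | nil => simp
      | @cons uu vv ww hadj q ih =>
        rw [SimpleGraph.Walk.length_cons, ih, hflip uu vv hadj]
        rw [pow_succ, mul_smul, neg_one_smul]
    refine ⟨SimpleGraph.Coloring.mk (fun v => (⟨G.dist xD v % 2, Nat.mod_lt _ (by omega)⟩ : Fin 2)) ?_⟩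
    intro v w hvw heq
    have hmod : G.dist xD v % 2 = G.dist xD w % 2 := by
      have := congrArg Fin.val heq
      simpa using this
    have h1 : G.dist xD w ≤ G.dist xD v + G.dist v w := conn.dist_triangle
    have h2 : G.dist xD v ≤ G.dist xD w + G.dist w v := conn.dist_triangle
    have h3 : G.dist v w = 1 := SimpleGraph.dist_eq_one_iff_adj.mpr hvw
    have h4 : G.dist w v = 1 := by rw [SimpleGraph.dist_comm]; exact h3
    have heqd : G.dist xD v = G.dist xD w := by omega
    obtain ⟨p, hp⟩ := conn.exists_walk_length_eq_dist xD v
    obtain ⟨q, hq⟩ := conn.exists_walk_length_eq_dist xD w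
    have hv := hwalk xD v p
    have hw' := hwalk xD w q
    rw [hp] at hv
    rw [hq, ← heqd] at hw'
    have hvw' : φ w = - φ v := hflip v w hvw
    have hfv : φ v = - φ v := by
      rw [← hv] at hw'
      rw [hw'] at hvw'
      exact hvw'
    have h0 : φ v + φ v = 0 := by
      nth_rewrite 2 [hfv]
      simp
    have hz : φ v = 0 := by
      have h2s : (2:ℝ) • φ v = 0 := by rw [two_smul]; exact h0
      have := smul_eq_zero.mp h2s
      rcases this with h | h
      · norm_num at h
      · exact h
    have hn : (inner ℝ (φ v) (φ v) : ℝ) = 1 := by rw [hφ, SimpleGraph.dist_self, hu0]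
    rw [hz] at hn
    simp at hn
  -- main case : a1 >= 1
  have ha1 : 1 ≤ drgA b c 1 := Nat.one_le_iff_ne_zero.mpr hcase
  have hα1 : (1:ℝ) ≤ α := by rw [hα]; exact_mod_cast ha1
  have hσgt : -1 < σ := by
    have h2 : σ * (α + 1) = -1 := by linarith [hσ1]
    nlinarith
  have habs : |σ| < 1 := by
    rw [abs_lt]; exact ⟨hσgt, by linarith⟩
  have hpowlt : ∀ n : ℕ, 1 ≤ n → σ ^ n < 1 := by
    intro n hn
    have h1 : |σ ^ n| < 1 := by
      rw [abs_pow]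
      calc |σ| ^ n ≤ |σ| ^ 1 := pow_le_pow_of_le_one (abs_nonneg σ) (le_of_lt habs) hn
        _ = |σ| := pow_one _
        _ < 1 := habs
    exact lt_of_le_of_lt (le_abs_self _) h1
  have UpowA : ∀ m, m ≤ j → u m = σ ^ m := by
    intro m
    induction m using Nat.strong_induction_on with
    | _ m ih =>
      intro hmj
      match m, ih, hmj with
      | 0, ih, hmj => rw [hu0, pow_zero]
      | 1, ih, hmj => rw [hu1σ, pow_one]
      | (m2+2), ih, hmj =>
        have heq := hrec (m2+1) (by omega) (by omega)
        have e0 : u m2 = σ ^ m2 := ih m2 (by omega) (by omega)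
        have e1 : u (m2+1) = σ ^ (m2+1) := ih (m2+1) (by omega) (by omega)
        have hdA : (drgA b c (m2+1) : ℝ) = (c (m2+1) : ℝ) * α := by
          have hh := ha (m2+1) (by omega) (by omega)
          rw [hh, hα]; push_cast; ring
        have hbR : (b (m2+1) : ℝ) = (b 0 : ℝ) - (c (m2+1):ℝ) - (c (m2+1):ℝ) * α := by
          have hp := hpart (m2+1) (by omega) (by omega)
          have hcast : (c (m2+1) : ℝ) + (drgA b c (m2+1) : ℝ) + (b (m2+1) : ℝ) = (b 0 : ℝ) := by
            exact_mod_cast hp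
          linarith [hdA]
        have hbne : (b (m2+1) : ℝ) ≠ 0 := by
          have hb1 := b_pos (m2+1) (by omega)
          have : (0:ℝ) < (b (m2+1) : ℝ) := by exact_mod_cast hb1
          linarith
        have hren : m2 + 1 + 1 = m2 + 2 := by omega
        have hm2 : (m2+1) - 1 = m2 := by omega
        rw [hren, hm2, e0, e1, hdA, hθσ, hbR] at heq
        have hstep : ((b 0 : ℝ) - (c (m2+1):ℝ) - (c (m2+1):ℝ) * α) * u (m2+2)
            = ((b 0 : ℝ) - (c (m2+1):ℝ) - (c (m2+1):ℝ) * α) * σ^(m2+2) := by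
          linear_combination heq - ((c (m2+1):ℝ) * σ^m2 * (1 - σ)) * hσ1
        have hbne' : ((b 0 : ℝ) - (c (m2+1):ℝ) - (c (m2+1):ℝ) * α) ≠ 0 := by
          rw [← hbR]; exact hbne
        exact mul_left_cancel₀ hbne' hstep
  -- fix a pair at distance j and use the Cauchy-Schwarz equality
  obtain ⟨x, y, hxyj⟩ := hreal j (by omega)
  have hjD' : j ≤ D := by omega
  set Z : Finset V := univ.filter (fun z => G.Adj x z ∧ G.dist y z = j - 1) with hZ
  set W : Finset V := univ.filter (fun w => G.dist x w = j - 1 ∧ G.Adj y w) with hW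
  have hZc : Z.card = c j := (hcnt j hjD' y x (by rw [SimpleGraph.dist_comm]; exact hxyj)).1
  have hWc : W.card = c j := by
    have h1 := (hcnt j hjD' x y hxyj).1
    have he : W = univ.filter (fun z => G.Adj y z ∧ G.dist x z = j - 1) := by
      ext z
      simp only [hW, mem_filter, mem_univ, true_and]
      tauto
    rw [he]
    exact h1
  have hCvec : Cvec G φ j x y = (∑ z ∈ Z, φ z) - ∑ w ∈ W, φ w := rfl
  have hIP : ∀ (S : Finset V) (v : V) (e : ℕ), (∀ z ∈ S, G.dist z v = e) →
      (inner ℝ (∑ z ∈ S, φ z) (φ v) : ℝ) = (S.card : ℝ) * u e := by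
    intro S v e he
    rw [sum_inner]
    calc ∑ z ∈ S, (inner ℝ (φ z) (φ v) : ℝ) = ∑ _z ∈ S, u e :=
          Finset.sum_congr rfl (fun z hz => by rw [hφ z v, he z hz])
      _ = (S.card : ℝ) * u e := by rw [Finset.sum_const, nsmul_eq_mul]
  have hZdx : ∀ z ∈ Z, G.dist z x = 1 := by
    intro z hz
    rw [hZ, mem_filter] at hz
    rw [SimpleGraph.dist_comm]
    exact SimpleGraph.dist_eq_one_iff_adj.mpr hz.2.1
  have hZdy : ∀ z ∈ Z, G.dist z y = j - 1 := by
    intro z hz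
    rw [hZ, mem_filter] at hz
    rw [SimpleGraph.dist_comm]
    exact hz.2.2
  have hWdx : ∀ w ∈ W, G.dist w x = j - 1 := by
    intro w hw
    rw [hW, mem_filter] at hw
    rw [SimpleGraph.dist_comm]
    exact hw.2.1
  have hWdy : ∀ w ∈ W, G.dist w y = 1 := by
    intro w hw
    rw [hW, mem_filter] at hw
    rw [SimpleGraph.dist_comm]
    exact SimpleGraph.dist_eq_one_iff_adj.mpr hw.2.2
  set Cv := Cvec G φ j x y with hCvdef
  have hQ := hS x y hxyj
  have huj1 : u (j-1) = σ^(j-1) := UpowA (j-1) (by omega)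
  have hujj : u j = σ^j := UpowA j le_rfl
  have hCx : (inner ℝ Cv (φ x) : ℝ) = (c j : ℝ) * σ - (c j : ℝ) * σ^(j-1) := by
    rw [hCvec, inner_sub_left, hIP Z x 1 hZdx, hIP W x (j-1) hWdx, hZc, hWc,
      hu1σ, huj1]
  have hCy : (inner ℝ Cv (φ y) : ℝ) = (c j : ℝ) * σ^(j-1) - (c j : ℝ) * σ := by
    rw [hCvec, inner_sub_left, hIP Z y (j-1) hZdy, hIP W y 1 hWdy, hZc, hWc,
      hu1σ, huj1]
  have hFv : ∀ v : V, (inner ℝ (φ x - φ y) (φ v) : ℝ) = u (G.dist x v) - u (G.dist y v) := by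
    intro v
    rw [inner_sub_left, hφ x v, hφ y v]
  have hdyx : G.dist y x = j := by rw [SimpleGraph.dist_comm]; exact hxyj
  have hFF : (inner ℝ (φ x - φ y) (φ x - φ y) : ℝ) = 2 * (1 - σ^j) := by
    rw [inner_sub_right, hFv x, hFv y, SimpleGraph.dist_self, SimpleGraph.dist_self,
      hdyx, hxyj, hu0, hujj]
    ring
  have hCF : (inner ℝ Cv (φ x - φ y) : ℝ) = 2 * ((c j : ℝ) * (σ - σ^(j-1))) := by
    rw [inner_sub_right, hCx, hCy]
    ring
  have hFFpos : (0:ℝ) < 1 - σ ^ j := by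
    have := hpowlt j (by omega)
    linarith
  have hFFne : (1 - σ^j) ≠ 0 := ne_of_gt hFFpos
  set t : ℝ := (c j : ℝ) * (σ - σ^(j-1)) / (1 - σ^j) with hT
  have hCtF : Cv = t • (φ x - φ y) := by
    have hexp := my_inner_expand Cv (φ x - φ y) t
    have hzero : (inner ℝ (Cv - t • (φ x - φ y)) (Cv - t • (φ x - φ y)) : ℝ) = 0 := by
      rw [hexp, hCF, hFF]
      rw [hCF, hFF] at hQ
      have hCC : (inner ℝ Cv Cv : ℝ) = 2 * ((c j:ℝ) * (σ - σ^(j-1)))^2 / (1 - σ^j) := by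
        rw [eq_div_iff hFFne]
        linear_combination hQ / 2
      rw [hCC, hT]
      field_simp
      ring
    have hsub : Cv - t • (φ x - φ y) = 0 := inner_self_eq_zero.mp hzero
    rw [sub_eq_zero] at hsub
    exact hsub
  -- extend geodesics beyond y
  have hvex : ∀ i, i ≤ D - j → ∃ v, G.dist x v = j + i ∧ G.dist y v = i := by
    intro i
    induction i with
    | zero => exact fun _ => ⟨y, by simpa using hxyj, SimpleGraph.dist_self⟩
    | succ n ihn =>
      intro hn
      obtain ⟨v, hxv, hyv⟩ := ihn (by omega)
      have hcard := (hcnt (j+n) (by omega) x v hxv).2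
      have hbp : 1 ≤ b (j+n) := b_pos (j+n) (by omega)
      rw [← hcard] at hbp
      obtain ⟨v', hv'⟩ := Finset.card_pos.mp hbp
      simp only [mem_filter, mem_univ, true_and] at hv'
      obtain ⟨hadj, hxv'⟩ := hv'
      have t1 : G.dist y v' ≤ G.dist y v + G.dist v v' := conn.dist_triangle
      have t2 : G.dist x v' ≤ G.dist x y + G.dist y v' := conn.dist_triangle
      have t3 : G.dist v v' = 1 := SimpleGraph.dist_eq_one_iff_adj.mpr hadj
      refine ⟨v', by omega, by omega⟩
  have hcj : (0:ℝ) < (c j : ℝ) := by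
    exact_mod_cast c_pos j (by omega) hjD'
  have hsne : σ - σ^(j-1) ≠ 0 := by
    have hj1 : j - 1 = (j-2) + 1 := by omega
    have h2 : σ^(j-2) < 1 := hpowlt (j-2) (by omega)
    intro hcontr
    rw [hj1, pow_succ'] at hcontr
    have h3 : σ * (1 - σ^(j-2)) = 0 := by linear_combination hcontr
    rcases mul_eq_zero.mp h3 with h | h
    · exact hσne h
    · linarith
  have ht' : t * (1 - σ^j) = (c j:ℝ) * (σ - σ^(j-1)) := by
    rw [hT]
    field_simp
  have Upow : ∀ m, m ≤ D → u m = σ ^ m := by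
    intro m
    induction m using Nat.strong_induction_on with
    | _ m ih =>
      intro hmD
      by_cases hmj : m ≤ j
      · exact UpowA m hmj
      · push_neg at hmj
        obtain ⟨v, hxv, hyv⟩ : ∃ v, G.dist x v = m ∧ G.dist y v = m - j := by
          obtain ⟨v, h1, h2⟩ := hvex (m - j) (by omega)
          rw [show j + (m - j) = m from by omega] at h1
          exact ⟨v, h1, h2⟩
        have hZdv : ∀ z ∈ Z, G.dist z v = m - 1 := by
          intro z hz
          rw [hZ, mem_filter] at hz
          have hxz : G.dist x z = 1 := SimpleGraph.dist_eq_one_iff_adj.mpr hz.2.1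
          have t1 : G.dist x v ≤ G.dist x z + G.dist z v := conn.dist_triangle
          have t2 : G.dist z v ≤ G.dist z y + G.dist y v := conn.dist_triangle
          have t3 : G.dist z y = j - 1 := by rw [SimpleGraph.dist_comm]; exact hz.2.2
          omega
        have hWdv : ∀ w ∈ W, G.dist w v = (m - j) + 1 := by
          intro w hw
          rw [hW, mem_filter] at hw
          have hwy : G.dist w y = 1 := by
            rw [SimpleGraph.dist_comm]
            exact SimpleGraph.dist_eq_one_iff_adj.mpr hw.2.2
          have t1 : G.dist x v ≤ G.dist x w + G.dist w v := conn.dist_triangle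
          have t2 : G.dist w v ≤ G.dist w y + G.dist y v := conn.dist_triangle
          have t4 : G.dist x w = j - 1 := hw.2.1
          omega
        have hCv_v : (inner ℝ Cv (φ v) : ℝ) = (c j : ℝ) * u (m-1) - (c j:ℝ) * u ((m-j)+1) := by
          rw [hCvec, inner_sub_left, hIP Z v (m-1) hZdv, hIP W v ((m-j)+1) hWdv, hZc, hWc]
        have hpar : (inner ℝ Cv (φ v) : ℝ) = t * (inner ℝ (φ x - φ y) (φ v) : ℝ) := by
          rw [hCtF, real_inner_smul_left]
        rw [hCv_v, hFv v, hxv, hyv] at hpar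
        have e1 : u (m-1) = σ^(m-1) := ih (m-1) (by omega) (by omega)
        have e2 : u ((m-j)+1) = σ^((m-j)+1) := ih ((m-j)+1) (by omega) (by omega)
        have e3 : u (m-j) = σ^(m-j) := ih (m-j) (by omega) (by omega)
        rw [e1, e2, e3] at hpar
        -- hpar : cj σ^{m-1} − cj σ^{m-j+1} = t (u m − σ^{m-j})
        have h5 : ((c j:ℝ) * σ^(m-1) - (c j:ℝ) * σ^((m-j)+1)) * (1 - σ^j)
            = (c j:ℝ) * (σ - σ^(j-1)) * (u m - σ^(m-j)) := by
          calc ((c j:ℝ) * σ^(m-1) - (c j:ℝ) * σ^((m-j)+1)) * (1 - σ^j)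
              = (t * (u m - σ^(m-j))) * (1 - σ^j) := by rw [hpar]
            _ = (t * (1 - σ^j)) * (u m - σ^(m-j)) := by ring
            _ = (c j:ℝ) * (σ - σ^(j-1)) * (u m - σ^(m-j)) := by rw [ht']
        have h6 : (σ^(m-1) - σ^((m-j)+1)) * (1 - σ^j)
            = (σ - σ^(j-1)) * (σ^m - σ^(m-j)) := by
          have e4 : σ^(m-1) = σ^(j-1) * σ^(m-j) := by
            rw [← pow_add]
            congr 1
            omega
          have e5 : σ^j = σ^(j-1) * σ := by
            rw [← pow_succ]
            congr 1
            omega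
          have e6 : σ^m = σ^(j-1) * σ * σ^(m-j) := by
            rw [← pow_succ, ← pow_add]
            congr 1
            omega
          have e7 : σ^((m-j)+1) = σ^(m-j) * σ := by rw [pow_succ]
          rw [e4, e5, e6, e7]
          ring
        have h7 : (c j:ℝ) * ((σ - σ^(j-1)) * (u m - σ^(m-j)))
            = (c j:ℝ) * ((σ - σ^(j-1)) * (σ^m - σ^(m-j))) := by
          linear_combination (c j:ℝ) * h6 - h5
        have h8 := mul_left_cancel₀ (ne_of_gt hcj) h7
        have h9 := mul_left_cancel₀ hsne h8
        linarith [h9]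
  -- conclude the intersection number identities
  have honeσ : (1:ℝ) - σ ≠ 0 := by intro h; linarith
  intro i hi1 hiD
  rcases Nat.lt_or_ge i D with hlt | hge
  · -- case i ≤ D - 1 : use the three-term recurrence
    have hrec_i := hrec i hi1 (by omega)
    have e0 : u (i-1) = σ^(i-1) := Upow (i-1) (by omega)
    have e1 : u i = σ^i := Upow i (by omega)
    have e2 : u (i+1) = σ^(i+1) := Upow (i+1) (by omega)
    have hp := hpart i hi1 (by omega)
    have hcast : (c i : ℝ) + (drgA b c i : ℝ) + (b i : ℝ) = (b 0 : ℝ) := by exact_mod_cast hp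
    rw [e0, e1, e2, hθσ] at hrec_i
    have hs1 : σ^i = σ^(i-1) * σ := by rw [← pow_succ]; congr 1; omega
    have hs2 : σ^(i+1) = σ^(i-1) * σ * σ := by rw [← pow_succ, ← pow_succ]; congr 1; omega
    rw [hs1, hs2] at hrec_i
    have hsp : σ^(i-1) ≠ 0 := pow_ne_zero _ hσne
    have key : (drgA b c i : ℝ) * (σ^(i-1) * (σ * (1 - σ)))
        = ((c i:ℝ) * α) * (σ^(i-1) * (σ * (1 - σ))) := by
      linear_combination hrec_i - (σ^(i-1) * σ^2) * hcast
        - (c i:ℝ) * σ^(i-1) * (1 - σ) * hσ1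
    have hfac : (σ^(i-1) * (σ * (1 - σ))) ≠ 0 :=
      mul_ne_zero hsp (mul_ne_zero hσne honeσ)
    have hAcα := mul_right_cancel₀ hfac key
    rw [hα] at hAcα
    exact_mod_cast hAcα
  · -- case i = D
    have hiD' : i = D := by omega
    rw [hiD']
    set Ny : Finset V := univ.filter (fun z => G.Adj yD z) with hNy
    have hadj1 : ∀ z ∈ Ny, G.dist z yD = 1 := by
      intro z hz
      rw [hNy, mem_filter] at hz
      rw [SimpleGraph.dist_comm]
      exact SimpleGraph.dist_eq_one_iff_adj.mpr hz.2
    have hNyc : Ny.card = b 0 := by rw [hNy]; exact hdeg yD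
    have hinz : ∀ z ∈ Ny, (inner ℝ (φ z) (∑ w ∈ Ny, φ w) : ℝ) = (b 0:ℝ) * σ^2 := by
      intro z hz
      rw [inner_sum]
      rw [Finset.sum_congr rfl (fun w _ => hφ z w)]
      have hdz : G.dist z yD = 1 := hadj1 z hz
      have hs := hsum' 1 (le_refl 1) (by omega) z yD hdz u
      rw [hNy, hs]
      have hr1 := hrec 1 (le_refl 1) (by omega)
      rw [hr1, hθσ, hu1σ]
      ring
    have hss : (inner ℝ (∑ w ∈ Ny, φ w) (∑ w ∈ Ny, φ w) : ℝ) = (b 0:ℝ) * ((b 0:ℝ) * σ^2) := by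
      rw [sum_inner]
      rw [Finset.sum_congr rfl hinz, Finset.sum_const, nsmul_eq_mul, hNyc]
    have hsy : (inner ℝ (∑ w ∈ Ny, φ w) (φ yD) : ℝ) = (b 0:ℝ) * σ := by
      rw [hIP Ny yD 1 hadj1, hNyc, hu1σ]
    have hyy : (inner ℝ (φ yD) (φ yD) : ℝ) = 1 := by rw [hφ, SimpleGraph.dist_self, hu0]
    have hzero2 : (inner ℝ ((∑ w ∈ Ny, φ w) - ((b 0:ℝ)*σ) • φ yD)
        ((∑ w ∈ Ny, φ w) - ((b 0:ℝ)*σ) • φ yD) : ℝ) = 0 := by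
      rw [my_inner_expand (∑ w ∈ Ny, φ w) (φ yD) ((b 0:ℝ)*σ), hss, hsy, hyy]
      ring
    have hvec : (∑ w ∈ Ny, φ w) = ((b 0:ℝ)*σ) • φ yD := by
      rw [← sub_eq_zero]
      exact inner_self_eq_zero.mp hzero2
    have hxs : (inner ℝ (φ xD) (∑ w ∈ Ny, φ w) : ℝ) = (b 0:ℝ)*σ*σ^D := by
      rw [hvec, real_inner_smul_right, hφ, hxyD, Upow D le_rfl]
    have hxs2 : (inner ℝ (φ xD) (∑ w ∈ Ny, φ w) : ℝ)
        = (c D:ℝ)*σ^(D-1) + (drgA b c D:ℝ)*σ^D + (b D:ℝ)*u (D+1) := by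
      rw [inner_sum]
      rw [Finset.sum_congr rfl (fun w _ => hφ xD w)]
      have hs := hsum' D (by omega) le_rfl xD yD hxyD u
      rw [hNy, hs, Upow (D-1) (by omega), Upow D le_rfl]
    have hbD0 : (b D:ℝ) = 0 := by rw [hbD]; norm_num
    have heqD : (c D:ℝ)*σ^(D-1) + (drgA b c D:ℝ)*σ^D = (b 0:ℝ)*σ*σ^D := by
      rw [hxs2, hbD0] at hxs
      linarith [hxs]
    have hpD := hpart D (by omega) le_rfl
    have hcastD : (c D:ℝ) + (drgA b c D:ℝ) + (b D:ℝ) = (b 0:ℝ) := by exact_mod_cast hpD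
    have hsD : σ^D = σ^(D-1) * σ := by rw [← pow_succ]; congr 1; omega
    rw [hsD] at heqD
    have hsp : σ^(D-1) ≠ 0 := pow_ne_zero _ hσne
    have key : (drgA b c D : ℝ) * (σ^(D-1) * (σ * (1 - σ)))
        = ((c D:ℝ) * α) * (σ^(D-1) * (σ * (1 - σ))) := by
      linear_combination heqD - (σ^(D-1) * σ^2) * hcastD + (σ^(D-1) * σ^2) * hbD0
        - (c D:ℝ) * σ^(D-1) * (1 - σ) * hσ1
    have hfac : (σ^(D-1) * (σ * (1 - σ))) ≠ 0 :=
      mul_ne_zero hsp (mul_ne_zero hσne honeσ)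
    have hAcα := mul_right_cancel₀ hfac key
    rw [hα] at hAcα
    exact_mod_cast hAcα
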